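/- arXiv:2006.01213 — 3 statements merged into one kernel-verified Lean document; each statement's English description precedes it below -/
import Mathlib

section
/- Let N ≥ 1 and let w : {0,…,N} → ℤ_{>0} be a weight function. Grade ℂ[x_0,…,x_N] by weighted degree with respect to w, so that its degree-d component is spanned by the monomials of weighted degree d. Let f_1,…,f_k (with 1 ≤ k ≤ N−1) be a regular sequence in ℂ[x_0,…,x_N] consisting of weighted homogeneous polynomials of positive weighted degrees. Then the zero locus of {f_1,…,f_k} in the projective spectrum Proj of this graded ring is a connected (and nonempty) subspace. -/
open MvPolynomial DirectSum

namespace WCI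


variable {A : Type*} [CommRing A]

/-- `x` is a nonzerodivisor modulo the ideal `K`. -/
def RegMod (K : Ideal A) (x : A) : Prop := ∀ g : A, g * x ∈ K → g ∈ K

lemma RegMod.pow {K : Ideal A} {x : A} (h : RegMod K x) :
    ∀ (n : ℕ) (g : A), g * x ^ n ∈ K → g ∈ K := by
  intro n
  induction n with
  | zero => intro g hg; simpa using hg
  | succ n ih =>
      intro g hg
      rw [pow_succ, ← mul_assoc] at hg
      exact ih g (h _ hg)

/-- span of the elements of a list -/
def listSpan (L : List A) : Ideal A := Ideal.span {a | a ∈ L}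

@[simp] lemma listSpan_nil : listSpan ([] : List A) = ⊥ := by
  simp [listSpan, Ideal.span_eq_bot]

@[simp] lemma listSpan_cons (c : A) (L : List A) :
    listSpan (c :: L) = Ideal.span {c} ⊔ listSpan L := by
  have : {a | a ∈ c :: L} = insert c {a | a ∈ L} := by
    ext a; simp [List.mem_cons]
  rw [listSpan, this, Ideal.span_insert, listSpan]

lemma listSpan_append (L₁ L₂ : List A) :
    listSpan (L₁ ++ L₂) = listSpan L₁ ⊔ listSpan L₂ := by
  induction L₁ with
  | nil => simp
  | cons c L ih => simp [ih, sup_assoc]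

lemma listSpan_concat (L : List A) (c : A) :
    listSpan (L ++ [c]) = listSpan L ⊔ Ideal.span {c} := by
  rw [listSpan_append, listSpan_cons, listSpan_nil, sup_bot_eq]

/-- `L` is a regular sequence modulo `K`. -/
def SeqReg : Ideal A → List A → Prop
  | _, [] => True
  | K, c :: L => RegMod K c ∧ SeqReg (K ⊔ Ideal.span {c}) L

@[simp] lemma seqReg_nil (K : Ideal A) : SeqReg K ([] : List A) := trivial

lemma seqReg_cons {K : Ideal A} {c : A} {L : List A} :
    SeqReg K (c :: L) ↔ RegMod K c ∧ SeqReg (K ⊔ Ideal.span {c}) L := Iff.rfl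

lemma seqReg_append {K : Ideal A} {L₁ L₂ : List A} :
    SeqReg K (L₁ ++ L₂) ↔ SeqReg K L₁ ∧ SeqReg (K ⊔ listSpan L₁) L₂ := by
  induction L₁ generalizing K with
  | nil => simp
  | cons c L ih =>
      simp only [List.cons_append, seqReg_cons, ih, listSpan_cons, and_assoc]
      rw [← sup_assoc]

lemma seqReg_get {K : Ideal A} {L : List A} (h : SeqReg K L) :
    ∀ (i : ℕ) (hi : i < L.length), RegMod (K ⊔ listSpan (L.take i)) L[i] := by
  induction L generalizing K with
  | nil => intro i hi; simp at hi
  | cons c L ih =>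
      intro i hi
      cases i with
      | zero => simpa using h.1
      | succ i =>
          have := ih h.2 i (by simpa using hi)
          simpa [sup_assoc] using this

lemma regMod_swap {K : Ideal A} {x z : A} (hx : RegMod K x)
    (hz : RegMod K z) (hzx : RegMod (K ⊔ Ideal.span {x}) z) :
    RegMod (K ⊔ Ideal.span {z}) x := by
  intro g hg
  obtain ⟨κ, hκ, ww, hw, hsum⟩ := Submodule.mem_sup.mp hg
  obtain ⟨a, rfl⟩ := Ideal.mem_span_singleton'.mp hw
  have haz : a * z ∈ K ⊔ Ideal.span {x} := by
    have h1 : g * x ∈ K ⊔ Ideal.span {x} :=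
      Submodule.mem_sup_right (Ideal.mem_span_singleton'.mpr ⟨g, rfl⟩)
    have h2 : κ ∈ K ⊔ Ideal.span {x} := Submodule.mem_sup_left hκ
    have : a * z = g * x - κ := by linear_combination hsum
    rw [this]; exact sub_mem h1 h2
  obtain ⟨κ', hκ', ww', hw', hsum'⟩ := Submodule.mem_sup.mp (hzx a haz)
  obtain ⟨b, rfl⟩ := Ideal.mem_span_singleton'.mp hw'
  have key : (g - b * z) * x = κ + κ' * z := by linear_combination -hsum - z * hsum'
  have : g - b * z ∈ K := hx _ (key ▸ add_mem hκ (Ideal.mul_mem_right _ _ hκ'))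
  have : (g - b * z) + b * z ∈ K ⊔ Ideal.span {z} :=
    add_mem (Submodule.mem_sup_left this)
      (Submodule.mem_sup_right (Ideal.mem_span_singleton'.mpr ⟨b, rfl⟩))
  simpa using this

/-- an element regular on all prefixes can be moved to the front -/
lemma seqReg_cons_of_regPrefix {z : A} :
    ∀ {K : Ideal A} {L : List A}, SeqReg K L →
      (∀ i ≤ L.length, RegMod (K ⊔ listSpan (L.take i)) z) → SeqReg K (z :: L) := by
  intro K L
  induction L generalizing K with
  | nil =>
      intro _ h
      refine ⟨?_, trivial⟩
      have := h 0 (by simp)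
      simpa using this
  | cons c L ih =>
      intro hL hz
      have hz0 : RegMod K z := by have := hz 0 (by simp); simpa using this
      have hz1 : RegMod (K ⊔ Ideal.span {c}) z := by
        have := hz 1 (by simp)
        simpa using this
      refine ⟨hz0, ?_, ?_⟩
      · exact regMod_swap hL.1 hz0 hz1
      · have hih : SeqReg (K ⊔ Ideal.span {c}) (z :: L) := by
          refine ih hL.2 ?_
          intro i hi
          have := hz (i + 1) (by simpa using hi)
          simpa [sup_assoc] using this
        have := hih.2
        rwa [sup_right_comm] at this

/-! ### Associated primes -/

section Assoc

variable {R : Type*} [CommRing R] {M : Type*} [AddCommGroup M] [Module R M]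

lemma isAssociatedPrime_sub_or_quot [IsNoetherianRing R] (N : Submodule R M) {p : Ideal R}
    (hp : IsAssociatedPrime p M) :
    IsAssociatedPrime p N ∨ IsAssociatedPrime p (M ⧸ N) := by
  obtain ⟨hprime, x, hx⟩ := isAssociatedPrime_iff.mp hp
  by_cases hcap : ∃ y, y ∈ (R ∙ x) ⊓ N ∧ y ≠ (0 : M)
  · obtain ⟨y, ⟨hy1, hy2⟩, hy0⟩ := hcap
    obtain ⟨r, rfl⟩ := Submodule.mem_span_singleton.mp hy1
    left
    refine isAssociatedPrime_iff.mpr ⟨hprime, ⟨r • x, hy2⟩, ?_⟩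
    ext a
    rw [Submodule.mem_colon_singleton, Submodule.mem_bot]
    have hmem : ∀ b : R, b ∈ p ↔ b • x = 0 := by
      intro b
      rw [hx, Submodule.mem_colon_singleton, Submodule.mem_bot]
    constructor
    · intro ha
      have hax : a • x = 0 := (hmem a).mp ha
      ext
      simp only [Submodule.coe_smul, ZeroMemClass.coe_zero]
      rw [show (a • (r • x) : M) = r • (a • x) from smul_comm a r x, hax, smul_zero]
    · intro ha
      have h1 : a • (r • x) = 0 := by
        have := congrArg (Subtype.val) ha
        simpa using this
      have h2 : (a * r) • x = 0 := by rw [mul_smul]; exact h1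
      have := (hmem (a * r)).mpr h2
      rcases hprime.mem_or_mem this with h | h
      · exact h
      · exact absurd (by rw [(hmem r).mp h]) hy0
  · right
    push_neg at hcap
    refine isAssociatedPrime_iff.mpr ⟨hprime, N.mkQ x, ?_⟩
    ext a
    rw [Submodule.mem_colon_singleton, Submodule.mem_bot]
    have hmem : ∀ b : R, b ∈ p ↔ b • x = 0 := by
      intro b; rw [hx, Submodule.mem_colon_singleton, Submodule.mem_bot]
    rw [← map_smul, Submodule.mkQ_apply, Submodule.Quotient.mk_eq_zero]
    constructor
    · intro ha
      rw [(hmem a).mp ha]; exact N.zero_mem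
    · intro ha
      have : a • x ∈ (R ∙ x) ⊓ N :=
        ⟨Submodule.smul_mem _ _ (Submodule.mem_span_singleton_self x), ha⟩
      have := hcap _ this
      exact (hmem a).mpr this

lemma associatedPrimes_finite [IsNoetherianRing R] [IsNoetherian R M] :
    (associatedPrimes R M).Finite := by
  have key : ∀ NN : Submodule R M, (associatedPrimes R (M ⧸ NN)).Finite := by
    intro NN
    induction NN using IsNoetherian.induction with
    | _ N ih =>
      by_cases hs : Subsingleton (M ⧸ N)
      · rw [associatedPrimes.eq_empty_of_subsingleton]
        exact Set.finite_empty
      · have : Nontrivial (M ⧸ N) := not_subsingleton_iff_nontrivial.mp hs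
        obtain ⟨p, hp⟩ := associatedPrimes.nonempty R (M ⧸ N)
        obtain ⟨hprime, x, hx⟩ := isAssociatedPrime_iff.mp hp
        have hx0 : x ≠ 0 := by
          rintro rfl
          apply hprime.ne_top
          rw [hx, Ideal.eq_top_iff_one, Submodule.mem_colon_singleton, Submodule.mem_bot, one_smul]
        obtain ⟨m, rfl⟩ := N.mkQ_surjective x
        set N' : Submodule R M := Submodule.comap N.mkQ (R ∙ (N.mkQ m)) with hN'
        have hNN' : N < N' := by
          refine lt_of_le_of_ne ?_ ?_
          · intro u hu
            simp only [hN', Submodule.mem_comap]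
            rw [show N.mkQ u = 0 from (Submodule.Quotient.mk_eq_zero N).mpr hu]
            exact Submodule.zero_mem _
          · intro heq
            apply hx0
            have hm : m ∈ N' := by
              simp only [hN', Submodule.mem_comap]
              exact Submodule.mem_span_singleton_self _
            rw [← heq] at hm
            exact (Submodule.Quotient.mk_eq_zero N).mpr hm
        have hsub : associatedPrimes R (M ⧸ N) ⊆
            associatedPrimes R (R ∙ (N.mkQ m)) ∪
              associatedPrimes R ((M ⧸ N) ⧸ (R ∙ (N.mkQ m))) := by
          intro q hq
          rcases isAssociatedPrime_sub_or_quot (R ∙ (N.mkQ m)) hq with h | h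
          · exact Or.inl h
          · exact Or.inr h
        refine Set.Finite.subset (Set.Finite.union ?_ ?_) hsub
        · set φ : R →ₗ[R] (M ⧸ N) := LinearMap.toSpanSingleton R (M ⧸ N) (N.mkQ m) with hφ
          have hker : LinearMap.ker φ = p := by
            ext a
            rw [LinearMap.mem_ker, hφ, LinearMap.toSpanSingleton_apply, hx,
              Submodule.mem_colon_singleton, Submodule.mem_bot]
          have hrange : LinearMap.range φ = (R ∙ (N.mkQ m)) :=
            (LinearMap.span_singleton_eq_range R (M ⧸ N) (N.mkQ m)).symm
          have e : (R ⧸ p) ≃ₗ[R] (R ∙ (N.mkQ m)) :=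
            ((Submodule.quotEquivOfEq _ _ hker.symm).trans φ.quotKerEquivRange).trans
              (LinearEquiv.ofEq _ _ hrange)
          rw [← LinearEquiv.AssociatedPrimes.eq e]
          rw [associatedPrimes.eq_singleton_of_isPrimary hprime.isPrimary]
          exact Set.finite_singleton _
        · have hmap : Submodule.map N.mkQ N' = (R ∙ (N.mkQ m)) := by
            rw [hN', Submodule.map_comap_eq, Submodule.range_mkQ, top_inf_eq]
          have e : ((M ⧸ N) ⧸ (R ∙ (N.mkQ m))) ≃ₗ[R] (M ⧸ N') := by
            rw [← hmap]
            exact Submodule.quotientQuotientEquivQuotient N N' hNN'.le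
          rw [LinearEquiv.AssociatedPrimes.eq e]
          exact ih N' hNN'
  have e : (M ⧸ (⊥ : Submodule R M)) ≃ₗ[R] M := Submodule.quotEquivOfEqBot ⊥ rfl
  rw [← LinearEquiv.AssociatedPrimes.eq e]
  exact key ⊥

end Assoc

lemma regMod_of_notMem_assPrimes [IsNoetherianRing A] {K : Ideal A} {z : A}
    (h : ∀ P ∈ associatedPrimes A (A ⧸ K), z ∉ P) : RegMod K z := by
  intro g hg
  by_contra hgK
  have hzd : z ∈ ⋃ p ∈ associatedPrimes A (A ⧸ K), p := by
    rw [biUnion_associatedPrimes_eq_zero_divisors]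
    refine ⟨Ideal.Quotient.mk K g, ?_, ?_⟩
    · simpa [Ne, Ideal.Quotient.eq_zero_iff_mem] using hgK
    · show Ideal.Quotient.mk K (z * g) = 0
      rw [Ideal.Quotient.eq_zero_iff_mem]
      rwa [mul_comm]
  obtain ⟨P, hP, hzP⟩ := Set.mem_iUnion₂.mp hzd
  exact h P hP hzP

lemma exists_witness_of_assPrime [IsNoetherianRing A] {K P : Ideal A} (hP : IsAssociatedPrime P (A ⧸ K)) :
    ∃ g, g ∉ K ∧ ∀ z ∈ P, g * z ∈ K := by
  obtain ⟨hprime, x, hx⟩ := isAssociatedPrime_iff.mp hP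
  obtain ⟨g, rfl⟩ := Ideal.Quotient.mk_surjective (I := K) x
  refine ⟨g, ?_, ?_⟩
  · intro hgK
    apply hprime.ne_top
    rw [hx, Ideal.eq_top_iff_one, Submodule.mem_colon_singleton, Submodule.mem_bot]
    show Ideal.Quotient.mk K (1 * g) = 0
    rw [Ideal.Quotient.eq_zero_iff_mem, one_mul]
    exact hgK
  · intro z hz
    rw [hx, Submodule.mem_colon_singleton, Submodule.mem_bot] at hz
    have : Ideal.Quotient.mk K (z * g) = 0 := hz
    rw [Ideal.Quotient.eq_zero_iff_mem] at this
    rwa [mul_comm]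

lemma prime_avoidance_set {I : Ideal A} {T : Set (Ideal A)} (hfin : T.Finite)
    (hT : ∀ P ∈ T, P.IsPrime) (hTI : ∀ P ∈ T, ¬ I ≤ P) :
    ∃ z ∈ I, ∀ P ∈ T, z ∉ P := by
  by_contra h
  push_neg at h
  have hsub : (I : Set A) ⊆ ⋃ P ∈ (↑hfin.toFinset : Set (Ideal A)), ↑P := by
    intro z hz
    obtain ⟨P, hPT, hzP⟩ := h z hz
    exact Set.mem_biUnion (by simpa using hPT) hzP
  obtain ⟨P, hPT, hIP⟩ := (Ideal.subset_union_prime ⊤ ⊤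
    (fun P hP _ _ => hT P (by simpa using hP))).mp hsub
  exact hTI P (by simpa using hPT) hIP

lemma le_assPrime_of_max [IsNoetherianRing A] {K I : Ideal A}
    (hmax : ∀ t ∈ I, ¬ RegMod K t) :
    ∃ P ∈ associatedPrimes A (A ⧸ K), I ≤ P := by
  have hfin : (associatedPrimes A (A ⧸ K)).Finite := associatedPrimes_finite
  have hsub : (I : Set A) ⊆ ⋃ P ∈ (↑hfin.toFinset : Set (Ideal A)), ↑P := by
    intro t ht
    have := hmax t ht
    simp only [RegMod, not_forall] at this
    obtain ⟨g, hg1, hg2⟩ := this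
    have : t ∈ ⋃ p ∈ associatedPrimes A (A ⧸ K), p := by
      rw [biUnion_associatedPrimes_eq_zero_divisors]
      refine ⟨Ideal.Quotient.mk K g, ?_, ?_⟩
      · simpa [Ne, Ideal.Quotient.eq_zero_iff_mem] using hg2
      · show Ideal.Quotient.mk K (t * g) = 0
        rw [Ideal.Quotient.eq_zero_iff_mem]
        rwa [mul_comm]
    obtain ⟨P, hP, htP⟩ := Set.mem_iUnion₂.mp this
    exact Set.mem_biUnion (by simpa using hP) htP
  obtain ⟨P, hPT, hIP⟩ := (Ideal.subset_union_prime ⊤ ⊤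
    (fun P hP _ _ => (AssociatedPrimes.mem_iff.mp (by simpa using hP : P ∈ _)).isPrime)).mp hsub
  exact ⟨P, by simpa using hPT, hIP⟩

lemma maximal_transfer [IsNoetherianRing A] {I J : Ideal A} {x z : A}
    (hx : RegMod J x) (hz : RegMod J z) (hzI : z ∈ I)
    (hmax : ∀ t ∈ I, ¬ RegMod (J ⊔ Ideal.span {x}) t) :
    ∀ t ∈ I, ¬ RegMod (J ⊔ Ideal.span {z}) t := by
  obtain ⟨P, hPass, hIP⟩ := le_assPrime_of_max hmax
  obtain ⟨g, hg, hgP⟩ := exists_witness_of_assPrime hPass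
  obtain ⟨κ, hκ, ww, hww, hsum⟩ := Submodule.mem_sup.mp (hgP z (hIP hzI))
  obtain ⟨g', rfl⟩ := Ideal.mem_span_singleton'.mp hww
  intro t htI hreg
  obtain ⟨κt, hκt, wt, hwt, hsumt⟩ := Submodule.mem_sup.mp (hgP t (hIP htI))
  obtain ⟨ht, rfl⟩ := Ideal.mem_span_singleton'.mp hwt
  -- hsum : κ + g' * x = g * z ; hsumt : κt + ht * x = g * t
  have key : (t * g' - z * ht) * x = z * κt - t * κ := by
    linear_combination t * hsum - z * hsumt
  have h1 : t * g' - z * ht ∈ J := by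
    apply hx
    rw [key]
    exact sub_mem (Ideal.mul_mem_left _ _ hκt) (Ideal.mul_mem_left _ _ hκ)
  have h2 : g' * t ∈ J ⊔ Ideal.span {z} := by
    have : g' * t = (t * g' - z * ht) + ht * z := by ring
    rw [this]
    exact add_mem (Submodule.mem_sup_left h1)
      (Submodule.mem_sup_right (Ideal.mem_span_singleton'.mpr ⟨ht, rfl⟩))
  have hg' : g' ∈ J ⊔ Ideal.span {z} := hreg g' h2
  obtain ⟨κ'', hκ'', wu, hwu, hsumu⟩ := Submodule.mem_sup.mp hg'
  obtain ⟨u, rfl⟩ := Ideal.mem_span_singleton'.mp hwu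
  -- hsumu : κ'' + u * z = g'
  have key2 : (g - u * x) * z = κ + x * κ'' := by
    linear_combination -hsum - x * hsumu
  have h3 : g - u * x ∈ J := by
    apply hz
    rw [key2]
    exact add_mem hκ (Ideal.mul_mem_left _ _ hκ'')
  apply hg
  have : (g - u * x) + u * x ∈ J ⊔ Ideal.span {x} :=
    add_mem (Submodule.mem_sup_left h3)
      (Submodule.mem_sup_right (Ideal.mem_span_singleton'.mpr ⟨u, rfl⟩))
  simpa using this

theorem rees_aux [IsNoetherianRing A] (I : Ideal A) :
    ∀ (n : ℕ) (K : Ideal A) (L₁ L₂ : List A),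
      SeqReg K L₁ → SeqReg K L₂ → L₁.length = n →
      (∀ c ∈ L₁, c ∈ I) → (∀ c ∈ L₂, c ∈ I) →
      (∀ t ∈ I, ¬ RegMod (K ⊔ listSpan L₁) t) →
      L₂.length ≤ n := by
  intro n
  induction n with
  | zero =>
      intro K L₁ L₂ h1 h2 hlen hI1 hI2 hmax
      rw [List.length_eq_zero_iff] at hlen
      subst hlen
      cases L₂ with
      | nil => simp
      | cons y ys =>
          exfalso
          apply hmax y (hI2 y (by simp))
          have : RegMod K y := h2.1
          simpa using this
  | succ n ih =>
      intro K L₁ L₂ h1 h2 hlen hI1 hI2 hmax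
      cases L₂ with
      | nil => simp
      | cons y ys =>
        rcases L₁.eq_nil_or_concat with rfl | ⟨L₁', xl, hL₁⟩
        · simp at hlen
        rw [List.concat_eq_append] at hL₁
        subst hL₁
        have hlen' : L₁'.length = n := by simpa using hlen
        rcases (y :: ys).eq_nil_or_concat with heq | ⟨L₂', yl, heq⟩
        · simp at heq
        rw [List.concat_eq_append] at heq
        -- set of associated primes of all prefix quotients
        set KS : Set (Ideal A) :=
          (⋃ i ∈ Finset.range (n + 1),
            associatedPrimes A (A ⧸ (K ⊔ listSpan ((L₁' ++ [xl]).take i)))) ∪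
          (⋃ i ∈ Finset.range (y :: ys).length,
            associatedPrimes A (A ⧸ (K ⊔ listSpan ((y :: ys).take i)))) with hKS
        have hKSfin : KS.Finite := by
          apply Set.Finite.union <;>
          · apply Set.Finite.biUnion (Finset.finite_toSet _)
            intro i _
            exact associatedPrimes_finite
        have hKSprime : ∀ P ∈ KS, P.IsPrime := by
          rintro P (hP | hP) <;>
          · obtain ⟨i, hi, hPi⟩ := Set.mem_iUnion₂.mp hP
            exact hPi.isPrime
        have hKSle : ∀ P ∈ KS, ¬ I ≤ P := by
          have main : ∀ (L : List A), SeqReg K L → (∀ c ∈ L, c ∈ I) →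
              ∀ (i : ℕ), i < L.length →
              ∀ P ∈ associatedPrimes A (A ⧸ (K ⊔ listSpan (L.take i))), ¬ I ≤ P := by
            intro L hL hLI i hi P hP hIP
            obtain ⟨g, hg, hgP⟩ := exists_witness_of_assPrime hP
            have hreg := seqReg_get hL i hi
            exact hg (hreg g (hgP _ (hIP (hLI _ (List.getElem_mem hi)))))
          rintro P (hP | hP)
          · obtain ⟨i, hi, hPi⟩ := Set.mem_iUnion₂.mp hP
            have hi' : i < (L₁' ++ [xl]).length := by
              simp only [List.length_append, List.length_singleton, hlen']
              simpa using Finset.mem_range.mp hi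
            exact main _ h1 hI1 i hi' P hPi
          · obtain ⟨i, hi, hPi⟩ := Set.mem_iUnion₂.mp hP
            exact main _ h2 hI2 i (Finset.mem_range.mp hi) P hPi
        obtain ⟨z, hzI, hzKS⟩ := prime_avoidance_set hKSfin hKSprime hKSle
        -- z is regular modulo all proper-prefix ideals
        have hreg₁ : ∀ i ≤ n, RegMod (K ⊔ listSpan (L₁'.take i)) z := by
          intro i hi
          apply regMod_of_notMem_assPrimes
          intro P hP
          apply hzKS
          rw [hKS]
          left
          refine Set.mem_biUnion (Finset.mem_range.mpr (show i < n + 1 by omega)) ?_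
          rwa [List.take_append_of_le_length (show i ≤ L₁'.length by omega)]
        have hreg₂ : ∀ i ≤ L₂'.length, RegMod (K ⊔ listSpan (L₂'.take i)) z := by
          intro i hi
          apply regMod_of_notMem_assPrimes
          intro P hP
          apply hzKS
          rw [hKS]
          right
          have hlen2 : (y :: ys).length = L₂'.length + 1 := by rw [heq]; simp
          refine Set.mem_biUnion (Finset.mem_range.mpr
            (show i < (y :: ys).length by omega)) ?_
          rw [heq, List.take_append_of_le_length (show i ≤ L₂'.length by omega)]
          exact hP
        -- move z to the front of both sequences
        have hT1 : SeqReg K (z :: L₁') := by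
          refine seqReg_cons_of_regPrefix (seqReg_append.mp h1).1 ?_
          intro i hi
          exact hreg₁ i (by omega)
        have hT2 : SeqReg K (z :: L₂') := by
          have h2' : SeqReg K L₂' := by
            rw [heq] at h2
            exact (seqReg_append.mp h2).1
          exact seqReg_cons_of_regPrefix h2' (fun i hi => hreg₂ i hi)
        -- maximality transfers from last element xl to z
        have hxlreg : RegMod (K ⊔ listSpan L₁') xl := by
          have := (seqReg_append.mp h1).2
          exact this.1
        have hzregJ : RegMod (K ⊔ listSpan L₁') z := by
          have := hreg₁ n le_rfl
          rwa [← hlen', List.take_length] at this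
        have hmax' : ∀ t ∈ I, ¬ RegMod ((K ⊔ listSpan L₁') ⊔ Ideal.span {xl}) t := by
          intro t ht
          have := hmax t ht
          rwa [listSpan_concat, ← sup_assoc] at this
        have hmaxz := maximal_transfer hxlreg hzregJ hzI hmax'
        -- apply the induction hypothesis
        have happ := ih (K ⊔ Ideal.span {z}) L₁' L₂' hT1.2 hT2.2 hlen'
          (fun c hc => hI1 c (List.mem_append_left _ hc))
          (fun c hc => hI2 c (by rw [heq]; exact List.mem_append_left _ hc))
          (by
            intro t ht
            have := hmaxz t ht
            rwa [sup_right_comm] at this)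
        have : (y :: ys).length = L₂'.length + 1 := by rw [heq]; simp
        omega

/-- Key existence result: a regular element in `I` avoiding finitely many primes. -/
theorem exists_regular [IsNoetherianRing A] {I : Ideal A} (L Lbig : List A)
    (hL : SeqReg ⊥ L) (hbig : SeqReg ⊥ Lbig)
    (hIL : ∀ c ∈ L, c ∈ I) (hIbig : ∀ c ∈ Lbig, c ∈ I)
    (hlen : L.length < Lbig.length) {T : Set (Ideal A)} (hTfin : T.Finite)
    (hT : ∀ P ∈ T, P.IsPrime) (hTI : ∀ P ∈ T, ¬ I ≤ P) :
    ∃ z ∈ I, RegMod (listSpan L) z ∧ ∀ P ∈ T, z ∉ P := by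
  have hAss : ∀ P ∈ associatedPrimes A (A ⧸ listSpan L), ¬ I ≤ P := by
    intro P hP hIP
    obtain ⟨g, hg, hgP⟩ := exists_witness_of_assPrime hP
    have hmax : ∀ t ∈ I, ¬ RegMod (⊥ ⊔ listSpan L) t := by
      intro t ht hregt
      rw [bot_sup_eq] at hregt
      exact hg (hregt g (hgP t (hIP ht)))
    have := rees_aux I L.length ⊥ L Lbig hL hbig rfl hIL hIbig hmax
    omega
  have hfin : (associatedPrimes A (A ⧸ listSpan L)).Finite := associatedPrimes_finite
  obtain ⟨z, hzI, hz⟩ := prime_avoidance_set (hTfin.union hfin)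
    (fun P hP => hP.elim (hT P) (fun h => (AssociatedPrimes.mem_iff.mp h).isPrime))
    (fun P hP => hP.elim (hTI P) (hAss P))
  refine ⟨z, hzI, ?_, fun P hP => hz P (Or.inl hP)⟩
  exact regMod_of_notMem_assPrimes (fun P hP => hz P (Or.inr hP))




lemma extract {F : Ideal A} {x y : A} (hx : RegMod F x)
    (hy : RegMod (F ⊔ Ideal.span {x}) y) (u : ℕ) :
    ∀ (s : ℕ) (α α' : A), α * y ^ u - α' * x ^ s ∈ F →
      ∃ r, α - x ^ s * r ∈ F ∧ α' - y ^ u * r ∈ F := by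
  intro s
  induction s with
  | zero =>
      intro α α' h
      refine ⟨α, by simp, ?_⟩
      have : α' - y ^ u * α = -(α * y ^ u - α' * x ^ 0) := by ring
      rw [this]
      exact neg_mem h
  | succ s ihs =>
      intro α α' h
      have hαmem : α * y ^ u ∈ F ⊔ Ideal.span {x} := by
        have h1 : α * y ^ u = (α * y ^ u - α' * x ^ (s+1)) + (α' * x ^ s) * x := by ring
        rw [h1]
        exact add_mem (Submodule.mem_sup_left h)
          (Submodule.mem_sup_right (Ideal.mem_span_singleton'.mpr ⟨α' * x ^ s, rfl⟩))
      have hα : α ∈ F ⊔ Ideal.span {x} := hy.pow u α hαmem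
      obtain ⟨φ, hφ, wv, hwv, hsum⟩ := Submodule.mem_sup.mp hα
      obtain ⟨a, rfl⟩ := Ideal.mem_span_singleton'.mp hwv
      -- hsum : φ + a * x = α
      have key : (a * y ^ u - α' * x ^ s) * x = (α * y ^ u - α' * x ^ (s+1)) - φ * y ^ u := by
        linear_combination y ^ u * hsum
      have h2 : a * y ^ u - α' * x ^ s ∈ F := by
        apply hx
        rw [key]
        exact sub_mem h (Ideal.mul_mem_right _ _ hφ)
      obtain ⟨r, hr1, hr2⟩ := ihs a α' h2
      refine ⟨r, ?_, hr2⟩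
      have : α - x ^ (s+1) * r = φ + (a - x ^ s * r) * x := by linear_combination -hsum
      rw [this]
      exact add_mem hφ (Ideal.mul_mem_right _ _ hr1)

lemma seqReg_ofFn_aux : ∀ (n : ℕ) (v : Fin n → A) (K : Ideal A),
    (∀ j : Fin n, RegMod (K ⊔ Ideal.span (v '' {i | i < j})) (v j)) →
    SeqReg K (List.ofFn v) := by
  intro n
  induction n with
  | zero => intro v K _; simp [List.ofFn_zero, SeqReg]
  | succ n ih =>
      intro v K hv
      rw [List.ofFn_succ]
      refine ⟨?_, ?_⟩
      · have := hv 0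
        have hempty : {i : Fin (n+1) | i < 0} = ∅ := by
          ext i; simp [Fin.not_lt_zero]
        rw [hempty] at this
        simpa using this
      · apply ih (v ∘ Fin.succ)
        intro j
        have := hv j.succ
        have hset : v '' {i | i < j.succ} = insert (v 0) ((v ∘ Fin.succ) '' {i | i < j}) := by
          ext a
          constructor
          · rintro ⟨i, hi, rfl⟩
            rcases Fin.eq_zero_or_eq_succ i with rfl | ⟨i', rfl⟩
            · exact Or.inl rfl
            · exact Or.inr ⟨i', by simpa [Fin.succ_lt_succ_iff] using hi, rfl⟩
          · rintro (rfl | ⟨i', hi', rfl⟩)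
            · exact ⟨0, by simp [Fin.succ_pos], rfl⟩
            · exact ⟨i'.succ, by simpa [Fin.succ_lt_succ_iff] using hi', rfl⟩
        rw [hset, Ideal.span_insert, ← sup_assoc] at this
        exact this

lemma seqReg_ofFn {n : ℕ} (v : Fin n → A)
    (h : ∀ j : Fin n, RegMod (Ideal.span (v '' {i | i < j})) (v j)) :
    SeqReg ⊥ (List.ofFn v) := by
  apply seqReg_ofFn_aux
  intro j
  rw [bot_sup_eq]
  exact h j

/-- The variables form a regular sequence in `MvPolynomial`. -/
lemma regMod_X {σ : Type*} {R : Type*} [CommRing R] (s : Set σ) (j : σ) (hj : j ∉ s) :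
    RegMod (Ideal.span (MvPolynomial.X '' s) : Ideal (MvPolynomial σ R)) (X j) := by
  classical
  intro g hg
  rw [mem_ideal_span_X_image] at hg ⊢
  intro m hm
  have hmem : m + Finsupp.single j 1 ∈ (g * X j).support := by
    rw [mem_support_iff, coeff_mul_X]
    exact mem_support_iff.mp hm
  obtain ⟨i, his, hi⟩ := hg _ hmem
  refine ⟨i, his, ?_⟩
  have hij : i ≠ j := fun h => hj (h ▸ his)
  simpa [Finsupp.single_apply, Ne.symm hij] using hi

lemma seqReg_X {n : ℕ} {R : Type*} [CommRing R] :
    SeqReg ⊥ (List.ofFn (fun i : Fin n => (X i : MvPolynomial (Fin n) R))) := by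
  apply seqReg_ofFn
  intro j
  exact regMod_X {i | i < j} j (by simp)



variable {σ : Type*} (w : σ → ℕ)

lemma const_of_degree_zero (hw : ∀ i, 0 < w i) {a : MvPolynomial σ ℂ}
    (ha : a ∈ weightedHomogeneousSubmodule ℂ w 0) : ∃ c : ℂ, a = C c := by
  classical
  rw [mem_weightedHomogeneousSubmodule] at ha
  refine ⟨constantCoeff a, ?_⟩
  ext m
  by_cases hm : m = 0
  · subst hm
    simp [coeff_C, constantCoeff_eq]
  · rw [coeff_C, if_neg (fun h => hm h.symm)]
    by_contra hne
    have hwm := ha hne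
    apply hm
    rw [Finsupp.weight_apply, Finsupp.sum] at hwm
    have hall := Finset.sum_eq_zero_iff.mp hwm
    ext i
    by_contra hi
    have hisupp : i ∈ m.support := Finsupp.mem_support_iff.mpr hi
    have := hall i hisupp
    simp only [smul_eq_mul] at this
    rcases Nat.mul_eq_zero.mp this with h | h
    · exact hi h
    · exact absurd h (hw i).ne'

variable [GradedAlgebra (weightedHomogeneousSubmodule ℂ w)]

local notation "𝒜" => weightedHomogeneousSubmodule ℂ w

lemma mem_of_component_mem
    {F : Ideal (MvPolynomial σ ℂ)} (hF : F.IsHomogeneous 𝒜)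
    {r : MvPolynomial σ ℂ}
    (h0 : (DirectSum.decompose 𝒜 r 0 : MvPolynomial σ ℂ) ∈ F)
    (hr : r * r - r ∈ F) : r ∈ F := by
  classical
  have key : ∀ n, (DirectSum.decompose 𝒜 r n : MvPolynomial σ ℂ) ∈ F := by
    intro n
    induction n using Nat.strong_induction_on with
    | _ n ih =>
      rcases Nat.eq_zero_or_pos n with rfl | hn
      · exact h0
      · have hc : (DirectSum.decompose 𝒜 (r * r - r) n : MvPolynomial σ ℂ) ∈ F := hF n hr
        have hdec : (DirectSum.decompose 𝒜 (r * r - r) n : MvPolynomial σ ℂ)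
            = (DirectSum.decompose 𝒜 (r * r) n : MvPolynomial σ ℂ)
              - (DirectSum.decompose 𝒜 r n : MvPolynomial σ ℂ) := by
          rw [DirectSum.decompose_sub]
          rfl
        have hmul : (DirectSum.decompose 𝒜 (r * r) n : MvPolynomial σ ℂ) ∈ F := by
          rw [DirectSum.decompose_mul, DirectSum.coe_mul_apply]
          apply Ideal.sum_mem
          rintro ⟨i, j⟩ hij
          simp only [Finset.mem_filter, Finset.mem_product] at hij
          rcases Nat.eq_zero_or_pos i with rfl | hi
          · exact Ideal.mul_mem_right _ _ h0
          · have hj : j < n := by omega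
            exact Ideal.mul_mem_left _ _ (ih j hj)
        have := sub_mem hmul hc
        rw [hdec, sub_sub_cancel] at this
        exact this
  rw [← DirectSum.sum_support_decompose 𝒜 r]
  exact Ideal.sum_mem _ (fun i _ => key i)

lemma idem_trivial (hw : ∀ i, 0 < w i)
    {F : Ideal (MvPolynomial σ ℂ)} (hF : F.IsHomogeneous 𝒜) (hFtop : F ≠ ⊤)
    {r : MvPolynomial σ ℂ} (hr : r * r - r ∈ F) : r ∈ F ∨ 1 - r ∈ F := by
  classical
  set r0 : MvPolynomial σ ℂ := (DirectSum.decompose 𝒜 r 0 : MvPolynomial σ ℂ) with hr0def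
  have hproj : ∀ a : MvPolynomial σ ℂ,
      GradedRing.projZeroRingHom 𝒜 a = (DirectSum.decompose 𝒜 a 0 : MvPolynomial σ ℂ) :=
    fun a => rfl
  have hr0mem : r0 * r0 - r0 ∈ F := by
    have h1 : (DirectSum.decompose 𝒜 (r * r - r) 0 : MvPolynomial σ ℂ) ∈ F := hF 0 hr
    have h2 : (DirectSum.decompose 𝒜 (r * r - r) 0 : MvPolynomial σ ℂ) = r0 * r0 - r0 := by
      rw [← hproj, map_sub, map_mul]
      rfl
    rwa [h2] at h1
  obtain ⟨c, hc⟩ := const_of_degree_zero w hw (a := r0) (SetLike.coe_mem _)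
  have hCc : C (c * c - c) ∈ F := by
    rw [C_sub, C_mul, ← hc]
    exact hr0mem
  by_cases hcc : c * c - c = 0
  · have hcases : c = 0 ∨ c = 1 := by
      rcases mul_eq_zero.mp (show c * (c - 1) = 0 by linear_combination hcc) with h | h
      · exact Or.inl h
      · exact Or.inr (by linear_combination h)
    rcases hcases with rfl | rfl
    · left
      apply mem_of_component_mem w hF _ hr
      rw [← hr0def, hc, map_zero]
      exact F.zero_mem
    · right
      apply mem_of_component_mem w hF
      · have : (DirectSum.decompose 𝒜 (1 - r) 0 : MvPolynomial σ ℂ) = 1 - r0 := by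
          rw [← hproj, map_sub, map_one]
          rfl
        rw [this, hc, C_1, sub_self]
        exact F.zero_mem
      · have : (1 - r) * (1 - r) - (1 - r) = r * r - r := by ring
        rw [this]
        exact hr
  · exfalso
    apply hFtop
    exact Ideal.eq_top_of_isUnit_mem F hCc ((isUnit_iff_ne_zero.mpr hcc).map C)

lemma le_homogeneousCore_of_isHomogeneous {G P : Ideal (MvPolynomial σ ℂ)}
    (hG : G.IsHomogeneous 𝒜) (hGP : G ≤ P) :
    G ≤ (P.homogeneousCore 𝒜).toIdeal := by
  intro g hg
  classical
  rw [← DirectSum.sum_support_decompose 𝒜 g]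
  apply Ideal.sum_mem
  intro i _
  exact Ideal.mem_homogeneousCore_of_homogeneous_of_mem
    ⟨i, SetLike.coe_mem _⟩ (hGP (hG i hg))

lemma mem_irrelevant_of_homogeneous_pos {a : MvPolynomial σ ℂ} {n : ℕ} (hn : n ≠ 0)
    (ha : a ∈ weightedHomogeneousSubmodule ℂ w n) :
    a ∈ (HomogeneousIdeal.irrelevant 𝒜).toIdeal := by
  show GradedRing.proj 𝒜 0 a = 0
  rw [GradedRing.proj_apply, DirectSum.decompose_of_mem_ne 𝒜 ha hn]


end WCI

open WCI

set_option maxHeartbeats 1600000 in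
/-- The zero locus, in the projective spectrum of `ℂ[x_0, …, x_N]` graded by
weighted degree (i.e. in the weighted projective space `ℙ(w(0), …, w(N))`), of a regular
sequence `f_1, …, f_k` (with `1 ≤ k ≤ N - 1`) of weighted homogeneous polynomials of positive
weighted degrees is connected and nonempty. -/
theorem weighted_complete_intersection_connected
    (N : ℕ) (hN : 1 ≤ N) (w : Fin (N + 1) → ℕ) (hw : ∀ i, 0 < w i)
    (k : ℕ) (hk : 1 ≤ k) (hkN : k ≤ N - 1)
    (f : Fin k → MvPolynomial (Fin (N + 1)) ℂ) (d : Fin k → ℕ)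
    (hd : ∀ j, 0 < d j)
    (hf : ∀ j, IsWeightedHomogeneous w (f j) (d j))
    -- `f` is a regular sequence: each `f j` is a nonzerodivisor modulo the ideal generated by
    -- the previous ones, and the `f j` generate a proper ideal.
    (hreg : ∀ j : Fin k, ∀ g : MvPolynomial (Fin (N + 1)) ℂ,
      g * f j ∈ Ideal.span (f '' {i | i < j}) → g ∈ Ideal.span (f '' {i | i < j}))
    (hproper : Ideal.span (Set.range f) ≠ ⊤) :
    letI := weightedGradedAlgebra ℂ w
    IsConnected (ProjectiveSpectrum.zeroLocus
      (weightedHomogeneousSubmodule ℂ w) (Set.range f)) := by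
  classical
  letI inst : GradedAlgebra (weightedHomogeneousSubmodule ℂ w) := weightedGradedAlgebra ℂ w
  show IsConnected (ProjectiveSpectrum.zeroLocus
    (weightedHomogeneousSubmodule ℂ w) (Set.range f))
  set F : Ideal (MvPolynomial (Fin (N + 1)) ℂ) := Ideal.span (Set.range f) with hFdef
  set Mirr : Ideal (MvPolynomial (Fin (N + 1)) ℂ) :=
    (HomogeneousIdeal.irrelevant (weightedHomogeneousSubmodule ℂ w)).toIdeal with hMirrdef
  -- basic facts
  have hd0 : ∀ j, d j ≠ 0 := fun j => (hd j).ne'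
  have hFhom : F.IsHomogeneous (weightedHomogeneousSubmodule ℂ w) := by
    apply Ideal.homogeneous_span
    rintro x ⟨j, rfl⟩
    exact ⟨d j, hf j⟩
  have hfM : ∀ j, f j ∈ Mirr := fun j =>
    mem_irrelevant_of_homogeneous_pos w (hd0 j) (hf j)
  have hXM : ∀ i : Fin (N + 1), (X i : MvPolynomial (Fin (N + 1)) ℂ) ∈ Mirr := fun i =>
    mem_irrelevant_of_homogeneous_pos w (hw i).ne' (isWeightedHomogeneous_X ℂ w i)
  -- the regular sequences as lists
  set Lf : List (MvPolynomial (Fin (N + 1)) ℂ) := List.ofFn f with hLfdef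
  set LX : List (MvPolynomial (Fin (N + 1)) ℂ) :=
    List.ofFn (fun i : Fin (N + 1) => (X i : MvPolynomial (Fin (N + 1)) ℂ)) with hLXdef
  have hLf : SeqReg ⊥ Lf := seqReg_ofFn f (fun j => hreg j)
  have hLX : SeqReg ⊥ LX := seqReg_X
  have hspanLf : listSpan Lf = F := by
    rw [hLfdef, listSpan, hFdef]
    congr 1
    ext a
    simp [List.mem_ofFn, Set.mem_range, eq_comm]
  have hmemLf : ∀ c ∈ Lf, c ∈ Mirr := by
    intro c hc
    rw [hLfdef, List.mem_ofFn] at hc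
    obtain ⟨j, rfl⟩ := hc
    exact hfM j
  have hmemLX : ∀ c ∈ LX, c ∈ Mirr := by
    intro c hc
    rw [hLXdef, List.mem_ofFn] at hc
    obtain ⟨i, rfl⟩ := hc
    exact hXM i
  have hlenf : Lf.length = k := by simp [hLfdef]
  have hlenX : LX.length = N + 1 := by simp [hLXdef]
  have hlen1 : Lf.length < LX.length := by rw [hlenf, hlenX]; omega
  -- a point of the zero locus produced from a prime avoiding an element of Mirr
  have relevant_point : ∀ (x : MvPolynomial (Fin (N + 1)) ℂ), x ∈ Mirr →
      ∀ (P : Ideal (MvPolynomial (Fin (N + 1)) ℂ)), P.IsPrime → x ∉ P →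
      ∃ pt : ProjectiveSpectrum (weightedHomogeneousSubmodule ℂ w),
        pt.asHomogeneousIdeal = P.homogeneousCore (weightedHomogeneousSubmodule ℂ w) := by
    intro x hxM P hP hxP
    refine ⟨⟨P.homogeneousCore _, hP.homogeneousCore, ?_⟩, rfl⟩
    intro hcon
    exact hxP (Ideal.toIdeal_homogeneousCore_le _ P (hcon hxM))
  -- Nonemptiness
  have hZne : (ProjectiveSpectrum.zeroLocus
      (weightedHomogeneousSubmodule ℂ w) (Set.range f)).Nonempty := by
    obtain ⟨x, hxM, hxreg, -⟩ := exists_regular Lf LX hLf hLX hmemLf hmemLX hlen1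
      Set.finite_empty (by simp) (by simp)
    rw [hspanLf] at hxreg
    have hxrad : x ∉ F.radical := by
      intro hmem
      obtain ⟨n, hn⟩ := Ideal.mem_radical_iff.mp hmem
      have h1 : (1 : MvPolynomial (Fin (N + 1)) ℂ) * x ^ n ∈ F := by simpa using hn
      have := hxreg.pow n 1 h1
      exact hproper ((Ideal.eq_top_iff_one _).mpr this)
    rw [Ideal.radical_eq_sInf] at hxrad
    have : ∃ P ∈ {J : Ideal (MvPolynomial (Fin (N + 1)) ℂ) | F ≤ J ∧ J.IsPrime}, x ∉ P := by
      by_contra hcon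
      push_neg at hcon
      exact hxrad (Submodule.mem_sInf.mpr hcon)
    obtain ⟨P, ⟨hFP, hPprime⟩, hxP⟩ := this
    obtain ⟨pt, hpt⟩ := relevant_point x hxM P hPprime hxP
    refine ⟨pt, ?_⟩
    rw [ProjectiveSpectrum.mem_zeroLocus]
    rintro a ⟨j, rfl⟩
    have hle : F ≤ pt.asHomogeneousIdeal.toIdeal := by
      rw [hpt]
      exact le_homogeneousCore_of_isHomogeneous w hFhom hFP
    exact hle (Ideal.subset_span ⟨j, rfl⟩)
  constructor
  · exact hZne
  -- Preconnectedness
  rw [isPreconnected_closed_iff]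
  intro t₁ t₂ hc₁ hc₂ hcover hne₁ hne₂
  by_contra hempty
  rw [Set.not_nonempty_iff_eq_empty] at hempty
  set Z := ProjectiveSpectrum.zeroLocus (weightedHomogeneousSubmodule ℂ w) (Set.range f)
    with hZdef
  set Z₁ := Z ∩ t₁ with hZ₁def
  set Z₂ := Z ∩ t₂ with hZ₂def
  have hZ₁closed : IsClosed Z₁ := (ProjectiveSpectrum.isClosed_zeroLocus _ _).inter hc₁
  have hZ₂closed : IsClosed Z₂ := (ProjectiveSpectrum.isClosed_zeroLocus _ _).inter hc₂
  set 𝔞 : Ideal (MvPolynomial (Fin (N + 1)) ℂ) :=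
    (ProjectiveSpectrum.vanishingIdeal Z₁).toIdeal with h𝔞def
  set 𝔟 : Ideal (MvPolynomial (Fin (N + 1)) ℂ) :=
    (ProjectiveSpectrum.vanishingIdeal Z₂).toIdeal with h𝔟def
  have h𝔞hom : 𝔞.IsHomogeneous (weightedHomogeneousSubmodule ℂ w) :=
    (ProjectiveSpectrum.vanishingIdeal Z₁).isHomogeneous
  have h𝔟hom : 𝔟.IsHomogeneous (weightedHomogeneousSubmodule ℂ w) :=
    (ProjectiveSpectrum.vanishingIdeal Z₂).isHomogeneous
  have h𝔞mem : ∀ pt ∈ Z₁, 𝔞 ≤ pt.asHomogeneousIdeal.toIdeal := by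
    intro pt hpt a ha
    exact (ProjectiveSpectrum.mem_vanishingIdeal Z₁ a).mp ha pt hpt
  have h𝔟mem : ∀ pt ∈ Z₂, 𝔟 ≤ pt.asHomogeneousIdeal.toIdeal := by
    intro pt hpt a ha
    exact (ProjectiveSpectrum.mem_vanishingIdeal Z₂ a).mp ha pt hpt
  have h𝔞Z : ProjectiveSpectrum.zeroLocus (weightedHomogeneousSubmodule ℂ w)
      (𝔞 : Set (MvPolynomial (Fin (N + 1)) ℂ)) = Z₁ := by
    have := ProjectiveSpectrum.zeroLocus_vanishingIdeal_eq_closure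
      (weightedHomogeneousSubmodule ℂ w) Z₁
    rw [hZ₁closed.closure_eq] at this
    exact this
  have h𝔟Z : ProjectiveSpectrum.zeroLocus (weightedHomogeneousSubmodule ℂ w)
      (𝔟 : Set (MvPolynomial (Fin (N + 1)) ℂ)) = Z₂ := by
    have := ProjectiveSpectrum.zeroLocus_vanishingIdeal_eq_closure
      (weightedHomogeneousSubmodule ℂ w) Z₂
    rw [hZ₂closed.closure_eq] at this
    exact this
  -- both ideals are contained in the irrelevant ideal
  have hproperIdeal : ∀ (J : Ideal (MvPolynomial (Fin (N + 1)) ℂ)),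
      J.IsHomogeneous (weightedHomogeneousSubmodule ℂ w) →
      (∃ pt : ProjectiveSpectrum (weightedHomogeneousSubmodule ℂ w),
        J ≤ pt.asHomogeneousIdeal.toIdeal) → J ≤ Mirr := by
    rintro J hJhom ⟨pt, hJpt⟩ a ha
    have hcomp : (DirectSum.decompose (weightedHomogeneousSubmodule ℂ w) a 0 :
      MvPolynomial (Fin (N + 1)) ℂ) ∈ J := hJhom 0 ha
    obtain ⟨c, hc⟩ := const_of_degree_zero w hw
      (a := (DirectSum.decompose (weightedHomogeneousSubmodule ℂ w) a 0 :
        MvPolynomial (Fin (N + 1)) ℂ)) (SetLike.coe_mem _)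
    have hc0 : c = 0 := by
      by_contra hcne
      exact pt.isPrime.ne_top (Ideal.eq_top_of_isUnit_mem _ (hJpt (hc ▸ hcomp))
        ((isUnit_iff_ne_zero.mpr hcne).map (C : ℂ →+* MvPolynomial (Fin (N + 1)) ℂ)))
    show GradedRing.proj (weightedHomogeneousSubmodule ℂ w) 0 a = 0
    rw [GradedRing.proj_apply]
    show (DirectSum.decompose (weightedHomogeneousSubmodule ℂ w) a 0 :
      MvPolynomial (Fin (N + 1)) ℂ) = 0
    rw [hc, hc0, map_zero]
  obtain ⟨p, hp⟩ := hne₁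
  obtain ⟨q, hq⟩ := hne₂
  have h𝔞M : 𝔞 ≤ Mirr := hproperIdeal 𝔞 h𝔞hom ⟨p, h𝔞mem p hp⟩
  have h𝔟M : 𝔟 ≤ Mirr := hproperIdeal 𝔟 h𝔟hom ⟨q, h𝔟mem q hq⟩
  have hdisj : Z₁ ∩ Z₂ = ∅ := by
    rw [Set.eq_empty_iff_forall_notMem]
    rintro pt ⟨hpt1, hpt2⟩
    have : pt ∈ Z ∩ (t₁ ∩ t₂) := ⟨hpt1.1, hpt1.2, hpt2.2⟩
    rw [hempty] at this
    exact this
  have hcoverZ : ∀ pt ∈ Z, pt ∈ Z₁ ∨ pt ∈ Z₂ := fun pt hpt =>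
    (hcover hpt).imp (fun h => ⟨hpt, h⟩) (fun h => ⟨hpt, h⟩)
  -- the product 𝔞 𝔟 is contained in the radical of F
  have hmulrad : 𝔞 * 𝔟 ≤ F.radical := by
    rw [Ideal.radical_eq_sInf]
    apply le_sInf
    rintro P ⟨hFP, hPprime⟩
    have hcore : F ≤ (P.homogeneousCore (weightedHomogeneousSubmodule ℂ w)).toIdeal :=
      le_homogeneousCore_of_isHomogeneous w hFhom hFP
    by_cases hrel : HomogeneousIdeal.irrelevant (weightedHomogeneousSubmodule ℂ w) ≤
      P.homogeneousCore (weightedHomogeneousSubmodule ℂ w)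
    · have hMP : Mirr ≤ P := fun z hz =>
        Ideal.toIdeal_homogeneousCore_le _ P (hrel hz)
      exact le_trans Ideal.mul_le_left (le_trans h𝔞M hMP)
    · have hptZ : (⟨P.homogeneousCore _, hPprime.homogeneousCore, hrel⟩ :
          ProjectiveSpectrum (weightedHomogeneousSubmodule ℂ w)) ∈ Z := by
        rw [hZdef, ProjectiveSpectrum.mem_zeroLocus]
        rintro a ⟨j, rfl⟩
        exact hcore (Ideal.subset_span ⟨j, rfl⟩)
      have hPle : (P.homogeneousCore (weightedHomogeneousSubmodule ℂ w)).toIdeal ≤ P :=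
        Ideal.toIdeal_homogeneousCore_le _ P
      rcases hcoverZ _ hptZ with h | h
      · exact le_trans Ideal.mul_le_left (le_trans (h𝔞mem _ h) hPle)
      · exact le_trans Ideal.mul_le_right (le_trans (h𝔟mem _ h) hPle)
  -- a power of 𝔞 𝔟 is contained in F
  have hfg : (𝔞 * 𝔟).FG := IsNoetherian.noetherian _
  obtain ⟨t0, ht0⟩ := Ideal.exists_pow_le_of_le_radical_of_fg hmulrad hfg
  set t := t0 + 1 with htdef
  have htF : (𝔞 * 𝔟) ^ t ≤ F := le_trans (Ideal.pow_le_pow_right (by omega)) ht0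
  have hIJ : ∀ a b : MvPolynomial (Fin (N + 1)) ℂ, a ∈ 𝔞 ^ t → b ∈ 𝔟 ^ t → a * b ∈ F := by
    intro a b ha hb
    have h1 : a * b ∈ 𝔞 ^ t * 𝔟 ^ t := Ideal.mul_mem_mul ha hb
    rw [← mul_pow] at h1
    exact htF h1
  -- choose regular elements x, y avoiding the primes of p and q
  set T : Set (Ideal (MvPolynomial (Fin (N + 1)) ℂ)) :=
    {p.asHomogeneousIdeal.toIdeal, q.asHomogeneousIdeal.toIdeal} with hTdef
  have hTfin : T.Finite := (Set.finite_singleton _).insert _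
  have hTprime : ∀ P ∈ T, P.IsPrime := by
    rintro P (rfl | rfl)
    · exact p.isPrime
    · exact q.isPrime
  have hTI : ∀ P ∈ T, ¬ Mirr ≤ P := by
    rintro P (rfl | rfl)
    · exact fun hMle => p.not_irrelevant_le (fun z hz => hMle hz)
    · exact fun hMle => q.not_irrelevant_le (fun z hz => hMle hz)
  obtain ⟨x, hxM, hxreg', hxT⟩ := exists_regular Lf LX hLf hLX hmemLf hmemLX hlen1
    hTfin hTprime hTI
  have hxreg : RegMod F x := by rwa [hspanLf] at hxreg'
  have hxp : x ∉ p.asHomogeneousIdeal.toIdeal := hxT _ (Set.mem_insert _ _)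
  have hxq : x ∉ q.asHomogeneousIdeal.toIdeal := hxT _ (Set.mem_insert_of_mem _ rfl)
  -- second regular element
  have hLfx : SeqReg ⊥ (Lf ++ [x]) := by
    rw [seqReg_append]
    refine ⟨hLf, ?_, trivial⟩
    rw [bot_sup_eq, hspanLf]
    exact hxreg
  have hmemLfx : ∀ c ∈ Lf ++ [x], c ∈ Mirr := by
    intro c hc
    rcases List.mem_append.mp hc with h | h
    · exact hmemLf c h
    · rw [List.mem_singleton] at h
      subst h
      exact hxM
  have hlen2 : (Lf ++ [x]).length < LX.length := by
    rw [List.length_append, hlenf, hlenX]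
    simp only [List.length_singleton]
    omega
  obtain ⟨y, hyM, hyreg', hyT⟩ := exists_regular (Lf ++ [x]) LX hLfx hLX hmemLfx hmemLX
    hlen2 hTfin hTprime hTI
  have hyreg : RegMod (F ⊔ Ideal.span {x}) y := by
    rwa [listSpan_concat, hspanLf] at hyreg'
  -- elements of Mirr are in the radical of 𝔞 ⊔ 𝔟
  have hMrad : ∀ z : MvPolynomial (Fin (N + 1)) ℂ, z ∈ Mirr → z ∈ (𝔞 ⊔ 𝔟).radical := by
    intro z hzM
    by_contra hzrad
    rw [Ideal.radical_eq_sInf] at hzrad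
    have : ∃ P ∈ {J : Ideal (MvPolynomial (Fin (N + 1)) ℂ) | 𝔞 ⊔ 𝔟 ≤ J ∧ J.IsPrime},
        z ∉ P := by
      by_contra hcon
      push_neg at hcon
      exact hzrad (Submodule.mem_sInf.mpr hcon)
    obtain ⟨P, ⟨hle, hPprime⟩, hzP⟩ := this
    obtain ⟨pt, hpt⟩ := relevant_point z hzM P hPprime hzP
    have hpt1 : pt ∈ Z₁ := by
      rw [← h𝔞Z, ProjectiveSpectrum.mem_zeroLocus]
      intro a ha
      have hh : 𝔞 ≤ pt.asHomogeneousIdeal.toIdeal := by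
        rw [hpt]
        exact le_homogeneousCore_of_isHomogeneous w h𝔞hom (le_trans le_sup_left hle)
      exact hh ha
    have hpt2 : pt ∈ Z₂ := by
      rw [← h𝔟Z, ProjectiveSpectrum.mem_zeroLocus]
      intro a ha
      have hh : 𝔟 ≤ pt.asHomogeneousIdeal.toIdeal := by
        rw [hpt]
        exact le_homogeneousCore_of_isHomogeneous w h𝔟hom (le_trans le_sup_right hle)
      exact hh ha
    have : pt ∈ Z₁ ∩ Z₂ := ⟨hpt1, hpt2⟩
    rw [hdisj] at this
    exact this
  obtain ⟨nx, hnx⟩ := Ideal.mem_radical_iff.mp (hMrad x hxM)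
  obtain ⟨ny, hny⟩ := Ideal.mem_radical_iff.mp (hMrad y hyM)
  set sx := nx * (t + t) with hsxdef
  set sy := ny * (t + t) with hsydef
  have hxpow : x ^ sx ∈ 𝔞 ^ t ⊔ 𝔟 ^ t := by
    have h1 : (x ^ nx) ^ (t + t) ∈ (𝔞 ⊔ 𝔟) ^ (t + t) := Ideal.pow_mem_pow hnx _
    rw [← pow_mul] at h1
    exact Ideal.sup_pow_add_le_pow_sup_pow h1
  have hypow : y ^ sy ∈ 𝔞 ^ t ⊔ 𝔟 ^ t := by
    have h1 : (y ^ ny) ^ (t + t) ∈ (𝔞 ⊔ 𝔟) ^ (t + t) := Ideal.pow_mem_pow hny _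
    rw [← pow_mul] at h1
    exact Ideal.sup_pow_add_le_pow_sup_pow h1
  obtain ⟨α, hα, β, hβ, hsumx⟩ := Submodule.mem_sup.mp hxpow
  obtain ⟨α', hα', β', hβ', hsumy⟩ := Submodule.mem_sup.mp hypow
  -- the key algebraic computation
  have hdelta : α * y ^ sy - α' * x ^ sx ∈ F := by
    have heq : α * y ^ sy - α' * x ^ sx = α * β' - α' * β := by
      linear_combination α' * hsumx - α * hsumy
    rw [heq]
    exact sub_mem (hIJ α β' hα hβ') (hIJ α' β hα' hβ)
  obtain ⟨r, hrx, -⟩ := extract hxreg hyreg sy sx α α' hdelta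
  have hαsq : α * α - α * x ^ sx ∈ F := by
    have heq : α * α - α * x ^ sx = -(α * β) := by linear_combination α * hsumx
    rw [heq]
    exact neg_mem (hIJ α β hα hβ)
  have hr2 : r * r - r ∈ F := by
    have hbig : (r * r - r) * (x ^ sx * x ^ sx) ∈ F := by
      have heq : (r * r - r) * (x ^ sx * x ^ sx) =
          (x ^ sx * r - α) * (x ^ sx * r + α) + (α * α - α * x ^ sx)
            + (α - x ^ sx * r) * x ^ sx := by ring
      rw [heq]
      refine add_mem (add_mem ?_ hαsq) (Ideal.mul_mem_right _ _ hrx)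
      have h2 : x ^ sx * r - α = -(α - x ^ sx * r) := by ring
      rw [h2]
      exact Ideal.mul_mem_right _ _ (neg_mem hrx)
    rw [← pow_add] at hbig
    exact hxreg.pow (sx + sx) _ hbig
  have hFle : ∀ pt : ProjectiveSpectrum (weightedHomogeneousSubmodule ℂ w), pt ∈ Z →
      F ≤ pt.asHomogeneousIdeal.toIdeal := by
    intro pt hpt
    rw [hFdef, Ideal.span_le]
    rintro a ⟨j, rfl⟩
    exact (ProjectiveSpectrum.mem_zeroLocus _ pt _).mp hpt ⟨j, rfl⟩
  have hFtop : F ≠ ⊤ := hproper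
  rcases idem_trivial w hw hFhom hFtop hr2 with hcase | hcase
  · -- r ∈ F : x ∈ q, contradiction
    have hαF : α ∈ F := by
      have heq : α = (α - x ^ sx * r) + x ^ sx * r := by ring
      rw [heq]
      exact add_mem hrx (Ideal.mul_mem_left _ _ hcase)
    apply hxq
    apply q.isPrime.mem_of_pow_mem sx
    have heq : x ^ sx = α + β := hsumx.symm
    rw [heq]
    refine add_mem (hFle q hq.1 hαF) ?_
    exact h𝔟mem q hq (Ideal.pow_le_self (by omega) hβ)
  · -- 1 - r ∈ F : x ∈ p, contradiction
    have hβF : β ∈ F := by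
      have heq : β = -(α - x ^ sx * r) + x ^ sx * (1 - r) := by linear_combination hsumx
      rw [heq]
      exact add_mem (neg_mem hrx) (Ideal.mul_mem_left _ _ hcase)
    apply hxp
    apply p.isPrime.mem_of_pow_mem sx
    have heq : x ^ sx = α + β := hsumx.symm
    rw [heq]
    refine add_mem ?_ (hFle p hp.1 hβF)
    exact h𝔞mem p hp (Ideal.pow_le_self (by omega) hα)
end

section
/- Let N ≥ 1, let w : {0,…,N} → ℤ_{>0} be a weight function, and let f ∈ ℂ[x_0,…,x_N] be weighted homogeneous of weighted degree d > 0 with respect to w, with d ≠ w(i) for every i ∈ {0,…,N}. Suppose f defines a quasi-smooth hypersurface: for every nonzero v ∈ ℂ^{N+1} with f(v) = 0, there exists an index i with (∂f/∂x_i)(v) ≠ 0. Then d > w(i) for every i ∈ {0,…,N}. -/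
open MvPolynomial

open Finsupp in
/-- Auxiliary: if each monomial of `f` has weight `d`, every weight is `≤ d` whenever the
corresponding exponent is positive. -/
lemma weight_le_of_pos {σ : Type*} (w : σ → ℕ) (m : σ →₀ ℕ) (i : σ) (h : m i ≠ 0) :
    w i ≤ Finsupp.weight w m := by
  classical
  rw [Finsupp.weight_apply, Finsupp.sum]
  calc w i ≤ m i • w i := by
        rw [smul_eq_mul]; exact Nat.le_mul_of_pos_left _ (Nat.pos_of_ne_zero h)
    _ ≤ _ := Finset.single_le_sum (f := fun j => m j • w j)
        (fun j _ => Nat.zero_le _) (Finsupp.mem_support_iff.mpr h)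

/-- The degree of a quasi-smooth weighted hypersurface which is not an
intersection with a linear cone strictly exceeds every weight. -/
theorem degree_gt_weights_of_quasi_smooth_hypersurface
    (N : ℕ) (hN : 1 ≤ N) (w : Fin (N + 1) → ℕ) (hw : ∀ i, 0 < w i)
    (f : MvPolynomial (Fin (N + 1)) ℂ) (d : ℕ) (hd : 0 < d)
    (hf : IsWeightedHomogeneous w f d)
    (hlc : ∀ i, d ≠ w i)
    -- quasi-smoothness: at every nonzero point of the affine cone over `{f = 0}`
    -- some partial derivative of `f` does not vanish.
    (hqs : ∀ v : Fin (N + 1) → ℂ, v ≠ 0 → eval v f = 0 →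
      ∃ i, eval v (pderiv i f) ≠ 0) :
    ∀ i, w i < d := by
  classical
  intro i
  by_contra hlt
  push_neg at hlt
  have hdi : d < w i := lt_of_le_of_ne hlt (hlc i)
  -- the point v = e_i
  set v : Fin (N + 1) → ℂ := fun j => if j = i then 1 else 0 with hv
  have hv0 : v ≠ 0 := by
    intro h
    have := congrFun h i
    simp [hv] at this
  -- every monomial of f has exponent 0 in the variable i
  have hmi : ∀ m : Fin (N + 1) →₀ ℕ, coeff m f ≠ 0 → m i = 0 := by
    intro m hm
    by_contra h
    have h1 : w i ≤ Finsupp.weight w m := weight_le_of_pos w m i h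
    rw [hf hm] at h1
    omega
  -- each monomial of f vanishes at v
  have hmz : ∀ m : Fin (N + 1) →₀ ℕ, coeff m f ≠ 0 →
      (∏ j ∈ m.support, v j ^ m j) = 0 := by
    intro m hm
    have hm0 : m ≠ 0 := by
      intro h
      have := hf hm
      rw [h] at this
      simp at this
      omega
    obtain ⟨j, hj⟩ := Finsupp.ne_iff.mp hm0
    simp only [Finsupp.coe_zero, Pi.zero_apply] at hj
    have hji : j ≠ i := by
      intro h; exact hj (h ▸ hmi m hm)
    refine Finset.prod_eq_zero (Finsupp.mem_support_iff.mpr hj) ?_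
    simp [hv, hji, zero_pow hj]
  -- f vanishes at v
  have hfv : eval v f = 0 := by
    rw [eval_eq]
    refine Finset.sum_eq_zero fun m hm => ?_
    rw [hmz m (mem_support_iff.mp hm), mul_zero]
  -- each partial derivative of f vanishes at v
  have hpd : ∀ k, eval v (pderiv k f) = 0 := by
    intro k
    conv_lhs => rw [f.as_sum, map_sum, map_sum]
    refine Finset.sum_eq_zero fun m hm => ?_
    rw [pderiv_monomial, eval_monomial]
    rcases Nat.eq_zero_or_pos (m k) with hk | hk
    · simp [hk]
    have hcm : coeff m f ≠ 0 := mem_support_iff.mp hm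
    -- m - single k 1 is nonzero
    set m' : (Fin (N + 1) →₀ ℕ) := m - Finsupp.single k 1 with hm'
    have hmne : m' ≠ 0 := by
      intro h
      have hm1 : m = Finsupp.single k 1 := by
        ext j
        have := DFunLike.congr_fun h j
        simp only [hm', Finsupp.coe_tsub, Pi.sub_apply, Finsupp.coe_zero, Pi.zero_apply,
          Finsupp.tsub_apply, Finsupp.zero_apply] at this
        rcases eq_or_ne j k with rfl | hjk
        · rw [Finsupp.single_eq_same] at this ⊢
          omega
        · simpa [Finsupp.single_eq_of_ne' (Ne.symm hjk)] using this
      have hwk := hf hcm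
      rw [hm1] at hwk
      simp [Finsupp.weight_apply, Finsupp.sum_single_index] at hwk
      exact hlc k hwk.symm
    obtain ⟨j, hj⟩ := Finsupp.ne_iff.mp hmne
    rw [Finsupp.coe_zero, Pi.zero_apply] at hj
    have hji : j ≠ i := by
      intro h
      subst h
      have h0 := hmi m hcm
      rw [hm', Finsupp.tsub_apply, h0] at hj
      simp at hj
    have hz : (m'.prod fun n e => v n ^ e) = 0 := by
      rw [Finsupp.prod]
      refine Finset.prod_eq_zero (Finsupp.mem_support_iff.mpr hj) ?_
      simp [hv, hji, zero_pow hj]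
    rw [hz, mul_zero]
  obtain ⟨k, hk⟩ := hqs v hv0 hfv
  exact hk (hpd k)
end

section
/- Let N ≥ 1, let w : {0,…,N} → ℤ_{>0} be a weight function, and let f ∈ ℂ[x_0,…,x_N] be weighted homogeneous of weighted degree d > 0 with respect to w, with d ≠ w(i) for every i ∈ {0,…,N}. Suppose f defines a quasi-smooth hypersurface: for every nonzero v ∈ ℂ^{N+1} with f(v) = 0, there exists an index i with (∂f/∂x_i)(v) ≠ 0. Then for every index i_0, the only weighted homogeneous polynomial g of weighted degree w(i_0) lying in the principal ideal generated by f is g = 0. -/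
open MvPolynomial

/-- If `f` defines a quasi-smooth weighted hypersurface which is not an
intersection with a linear cone, then for every index `i₀` the only weighted homogeneous
polynomial of weighted degree `w i₀` lying in the principal ideal `(f)` is zero. -/
theorem no_weight_degree_element_in_quasi_smooth_hypersurface_ideal
    (N : ℕ) (hN : 1 ≤ N) (w : Fin (N + 1) → ℕ) (hw : ∀ i, 0 < w i)
    (f : MvPolynomial (Fin (N + 1)) ℂ) (d : ℕ) (hd : 0 < d)
    (hf : IsWeightedHomogeneous w f d)
    (hlc : ∀ i, d ≠ w i)
    -- quasi-smoothness: at every nonzero point of the affine cone over `{f = 0}`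
    -- some partial derivative of `f` does not vanish.
    (hqs : ∀ v : Fin (N + 1) → ℂ, v ≠ 0 → eval v f = 0 →
      ∃ i, eval v (pderiv i f) ≠ 0) :
    ∀ (i₀ : Fin (N + 1)) (g : MvPolynomial (Fin (N + 1)) ℂ),
      IsWeightedHomogeneous w g (w i₀) →
      g ∈ Ideal.span ({f} : Set (MvPolynomial (Fin (N + 1)) ℂ)) →
      g = 0 := by
  classical
  intro i₀ g hg hgmem
  by_contra hg0
  obtain ⟨h, rfl⟩ := Ideal.mem_span_singleton.1 hgmem
  have hf0 : f ≠ 0 := fun hf0 => hg0 (by simp [hf0])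
  have hh0 : h ≠ 0 := fun hh0 => hg0 (by simp [hh0])
  -- Step 1: d < w i₀
  obtain ⟨e₀, he₀⟩ := exists_coeff_ne_zero hh0
  set K := Finsupp.weight w e₀ with hK
  have hcompne : weightedHomogeneousComponent w K h ≠ 0 := by
    intro hc
    have := coeff_weightedHomogeneousComponent (w := w) K h e₀
    rw [hc, if_pos rfl, coeff_zero] at this
    exact he₀ this.symm
  set p := f * weightedHomogeneousComponent w K h with hp
  have hp0 : p ≠ 0 := mul_ne_zero hf0 hcompne
  have hphom : IsWeightedHomogeneous w p (d + K) :=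
    hf.mul (weightedHomogeneousComponent_isWeightedHomogeneous K h)
  obtain ⟨e₁, he₁⟩ := exists_coeff_ne_zero hp0
  have hcoeffg : coeff e₁ (f * h) ≠ 0 := by
    have hsum : h = ∑ m ∈ (Set.Finite.toFinset (weightedHomogeneousComponent_finsupp (w := w) h)),
        weightedHomogeneousComponent w m h := by
      conv_lhs => rw [← sum_weightedHomogeneousComponent w h]
      rw [finsum_eq_sum _ (weightedHomogeneousComponent_finsupp (w := w) h)]
    rw [hsum, Finset.mul_sum, coeff_sum]
    have hKmem : K ∈ (Set.Finite.toFinset (weightedHomogeneousComponent_finsupp (w := w) h)) := by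
      refine (Set.Finite.mem_toFinset _).2 ?_
      exact hcompne
    rw [Finset.sum_eq_single_of_mem K hKmem]
    · exact he₁
    · intro m _ hm
      refine (hf.mul (weightedHomogeneousComponent_isWeightedHomogeneous m h)).coeff_eq_zero e₁ ?_
      rw [hphom he₁]
      intro hcontra
      exact hm (by omega)
  have he₁deg : Finsupp.weight w e₁ = d + K := hphom he₁
  have hdK : d + K = w i₀ := by rw [← hg hcoeffg, he₁deg]
  have hKpos : 0 < K := by
    rcases Nat.eq_zero_or_pos K with hK0 | hK0
    · exact absurd (by omega : d = w i₀) (hlc i₀)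
    · exact hK0
  have hdlt : d < w i₀ := by omega
  -- Step 2: every monomial of f avoids i₀
  have hsupp : ∀ e : Fin (N + 1) →₀ ℕ, coeff e f ≠ 0 → e i₀ = 0 := by
    intro e he
    by_contra hne
    have := Finsupp.le_weight_of_ne_zero' (w := w) hne
    rw [hf he] at this
    omega
  -- helper: evaluation of a monomial avoiding i₀ and nonzero at Pi.single i₀ 1 is 0
  set v : Fin (N + 1) → ℂ := Pi.single i₀ 1 with hv
  have hmono : ∀ (e : Fin (N + 1) →₀ ℕ) (a : ℂ), e i₀ = 0 → e ≠ 0 →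
      eval v (monomial e a) = 0 := by
    intro e a hei₀ hene
    obtain ⟨k, hk⟩ : ∃ k, e k ≠ 0 := by
      by_contra hc
      push_neg at hc
      exact hene (Finsupp.ext hc)
    have hki₀ : k ≠ i₀ := fun hcontra => hk (hcontra ▸ hei₀)
    rw [eval_monomial, Finsupp.prod]
    have : v k ^ e k = 0 := by
      rw [hv, Pi.single_eq_of_ne hki₀, zero_pow hk]
    rw [Finset.prod_eq_zero (Finsupp.mem_support_iff.2 hk) this, mul_zero]
  have hvne : v ≠ 0 := by
    intro hc
    have : v i₀ = 0 := by rw [hc]; rfl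
    rw [hv, Pi.single_eq_same] at this
    exact one_ne_zero this
  have hfv : eval v f = 0 := by
    conv_lhs => rw [f.as_sum]
    rw [map_sum]
    refine Finset.sum_eq_zero fun e he => ?_
    have hce : coeff e f ≠ 0 := mem_support_iff.1 he
    refine hmono e _ (hsupp e hce) fun hc => ?_
    have := hf hce
    rw [hc, map_zero] at this
    omega
  obtain ⟨j, hj⟩ := hqs v hvne hfv
  apply hj
  conv_lhs => rw [f.as_sum]
  rw [map_sum, map_sum]
  refine Finset.sum_eq_zero fun e he => ?_
  have hce : coeff e f ≠ 0 := mem_support_iff.1 he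
  rw [pderiv_monomial]
  rcases Nat.eq_zero_or_pos (e j) with hej | hej
  · rw [hej]; simp
  · set e' := e - Finsupp.single j 1 with he'
    have hee' : e = e' + Finsupp.single j 1 := by
      ext k
      simp only [he', Finsupp.add_apply, Finsupp.tsub_apply, Finsupp.single_apply]
      by_cases hkj : j = k
      · subst hkj; simp only [eq_self_iff_true, if_true]; omega
      · simp [hkj]
    have he'i₀ : e' i₀ = 0 := by
      have h0 : e i₀ = 0 := hsupp e hce
      simp only [he', Finsupp.tsub_apply]
      omega
    refine hmono e' _ he'i₀ fun hc => ?_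
    have hwe : Finsupp.weight w e = d := hf hce
    rw [hee', hc, zero_add] at hwe
    rw [Finsupp.weight_apply, Finsupp.sum_single_index (by simp), one_smul] at hwe
    exact hlc j hwe.symm
end
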